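/- Let λ > 0, let f ∈ C¹([0, 1)) ∩ C³((0, 1)) with f(0) = f′(0) = 0 and t f″(t) → 0 as t → 0⁺, and let Γ = {(−t, f(t)) : 0 ≤ t < 1} ⊆ ℝ². Let B₁ be the open unit disc and suppose u : B₁ \ Γ → ℝ is differentiable and the pair (u, Γ) minimizes the Mumford–Shah energy J(v, Γ′) = ∫_{B₁ \ Γ′} ‖∇v‖² dx dy + λ² (π/2) 𝓗¹(Γ′) among all pairs (v, Γ′) with Γ′ ⊆ closure(B₁) closed, 𝓗¹(Γ′) < ∞, v differentiable on B₁ \ Γ′, and v = u on ∂B₁ away from Γ ∪ Γ′. If the rescaled functions t ↦ f(ρt) / max_{0 < τ ≤ ρ} |f(τ)| converge, as ρ → 0⁺, in C¹ on compact subsets of [0, 1), to the zero function, then f decays faster than any power at the crack-tip: for every M > 0, lim_{t → 0⁺} t^{−M} f(t) = 0. -/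

import Mathlib

open MeasureTheory Filter
open scoped ENNReal

/-- Degenerate blow-up case at the crack-tip of a Mumford–Shah minimizer. With the same
setting as in the crack-tip asymptotics theorem (`λ > 0`, `f ∈ C¹([0,1)) ∩ C³((0,1))`,
`f(0) = f′(0) = 0`, `t f″(t) → 0`, `Γ = {(−t, f(t)) : 0 ≤ t < 1}`, `(u, Γ)` a Mumford–Shah
minimizer under its own boundary values), if the rescalings `t ↦ f(ρt)/max_{0<τ≤ρ}|f(τ)|`
converge in `C¹` on compact subsets of `[0,1)` to the zero function as `ρ → 0⁺`, then `f`
decays faster than any power at the crack-tip: for every `M > 0`,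
`lim_{t→0⁺} t^{−M} f(t) = 0`. -/
theorem crack_tip_infinite_order_decay (lam : ℝ) (hlam : 0 < lam) (f : ℝ → ℝ)
    (hf1 : ContDiffOn ℝ 1 f (Set.Ico 0 1))
    (hf3 : ContDiffOn ℝ 3 f (Set.Ioo 0 1))
    (hf0 : f 0 = 0)
    (hf0' : derivWithin f (Set.Ico 0 1) 0 = 0)
    (hf'' : Tendsto (fun t => t * deriv (deriv f) t) (nhdsWithin 0 (Set.Ioi 0)) (nhds 0))
    (Γ : Set ℂ)
    (hΓ : Γ = {z : ℂ | ∃ t : ℝ, 0 ≤ t ∧ t < 1 ∧ z = (-t : ℝ) + (f t : ℝ) * Complex.I})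
    (u : ℂ → ℝ)
    (hu : DifferentiableOn ℝ u (Metric.ball (0 : ℂ) 1 \ Γ))
    (hmin : ∀ (v : ℂ → ℝ) (Γ' : Set ℂ),
      Γ' ⊆ closure (Metric.ball (0 : ℂ) 1) → IsClosed Γ' → μH[1] Γ' < ⊤ →
      DifferentiableOn ℝ v (Metric.ball (0 : ℂ) 1 \ Γ') →
      (∀ z ∈ Metric.sphere (0 : ℂ) 1, z ∉ Γ ∪ Γ' → v z = u z) →
      (∫⁻ z in (Metric.ball (0 : ℂ) 1 \ Γ), (‖gradient u z‖₊ : ℝ≥0∞) ^ 2 ∂volume) +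
          ENNReal.ofReal (lam ^ 2 * (Real.pi / 2)) * μH[1] Γ ≤
        (∫⁻ z in (Metric.ball (0 : ℂ) 1 \ Γ'), (‖gradient v z‖₊ : ℝ≥0∞) ^ 2 ∂volume) +
          ENNReal.ofReal (lam ^ 2 * (Real.pi / 2)) * μH[1] Γ')
    (hconv : ∀ b : ℝ, 0 < b → b < 1 →
      TendstoUniformlyOn
        (fun ρ t => f (ρ * t) / sSup ((fun τ => |f τ|) '' Set.Ioc 0 ρ)) (fun _ => 0)
        (nhdsWithin 0 (Set.Ioi 0)) (Set.Icc 0 b) ∧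
      TendstoUniformlyOn
        (fun ρ t => deriv (fun s => f (ρ * s) / sSup ((fun τ => |f τ|) '' Set.Ioc 0 ρ)) t)
        (fun _ => 0) (nhdsWithin 0 (Set.Ioi 0)) (Set.Icc 0 b)) :
    ∀ M : ℝ, 0 < M →
      Tendsto (fun t : ℝ => t ^ (-M) * f t) (nhdsWithin 0 (Set.Ioi 0)) (nhds 0) := by
  intro M hM
  set S : ℝ → ℝ := fun ρ => sSup ((fun τ => |f τ|) '' Set.Ioc 0 ρ) with hSdef
  have hcont : ContinuousOn f (Set.Ico 0 1) := hf1.continuousOn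
  have hbdd : ∀ r : ℝ, 0 < r → r < 1 → BddAbove ((fun τ => |f τ|) '' Set.Ioc 0 r) := by
    intro r hr0 hr1
    have hsub : Set.Icc (0:ℝ) r ⊆ Set.Ico 0 1 := fun x hx => ⟨hx.1, lt_of_le_of_lt hx.2 hr1⟩
    have hc : ContinuousOn (fun τ => |f τ|) (Set.Icc 0 r) := (hcont.mono hsub).abs
    exact ((isCompact_Icc.image_of_continuousOn hc).bddAbove).mono
      (Set.image_mono Set.Ioc_subset_Icc_self)
  have hle : ∀ r s : ℝ, 0 < r → r < 1 → s ∈ Set.Ioc (0:ℝ) r → |f s| ≤ S r :=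
    fun r s hr0 hr1 hs => le_csSup (hbdd r hr0 hr1) ⟨s, hs, rfl⟩
  by_cases hz : ∃ ρ₀ ∈ Set.Ioo (0:ℝ) 1, ∀ s ∈ Set.Ioc (0:ℝ) ρ₀, f s = 0
  · obtain ⟨ρ₀, hρ₀, h0⟩ := hz
    have heq : (fun t : ℝ => t ^ (-M) * f t) =ᶠ[nhdsWithin 0 (Set.Ioi 0)] fun _ => 0 := by
      filter_upwards [Ioo_mem_nhdsGT_of_mem ⟨le_refl (0:ℝ), hρ₀.1⟩] with t ht
      rw [h0 t ⟨ht.1, ht.2.le⟩, mul_zero]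
    exact Tendsto.congr' heq.symm tendsto_const_nhds
  · push_neg at hz
    have hSpos : ∀ r : ℝ, 0 < r → r < 1 → 0 < S r := by
      intro r hr0 hr1
      obtain ⟨s, hs, hfs⟩ := hz r ⟨hr0, hr1⟩
      exact lt_of_lt_of_le (abs_pos.mpr hfs) (hle r s hr0 hr1 hs)
    have key : ∀ ε : ℝ, 0 < ε → ∃ δ, 0 < δ ∧ δ < 1 ∧ ∀ ρ ∈ Set.Ioo (0:ℝ) δ,
        ∀ s ∈ Set.Ioc (0:ℝ) (ρ/2), |f s| ≤ ε * S ρ := by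
      intro ε hε
      obtain ⟨hU, -⟩ := hconv (1/2) (by norm_num) (by norm_num)
      rw [Metric.tendstoUniformlyOn_iff] at hU
      have hU' := hU ε hε
      rw [Filter.eventually_iff, mem_nhdsGT_iff_exists_Ioo_subset] at hU'
      obtain ⟨u', hu', hsub⟩ := hU'
      refine ⟨min u' (1/2), lt_min hu' (by norm_num), lt_of_le_of_lt (min_le_right _ _) (by norm_num), ?_⟩
      intro ρ hρ s hs
      have hρ0 : 0 < ρ := hρ.1
      have hρu : ρ < u' := lt_of_lt_of_le hρ.2 (min_le_left _ _)
      have hρ1 : ρ < 1 := by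
        have := lt_of_lt_of_le hρ.2 (min_le_right u' (1/2))
        linarith
      have hmem := hsub ⟨hρ0, hρu⟩ (s / ρ) ⟨div_nonneg hs.1.le hρ0.le,
        (div_le_iff₀ hρ0).mpr (by linarith [hs.2])⟩
      rw [Real.dist_eq, zero_sub, abs_neg, mul_div_cancel₀ s hρ0.ne'] at hmem
      have hSρ : 0 < S ρ := hSpos ρ hρ0 hρ1
      rw [abs_div, abs_of_pos hSρ, div_lt_iff₀ hSρ] at hmem
      linarith [hmem]
    set c : ℝ := (2:ℝ) ^ (-(M+1)) with hcdef
    have hc0 : 0 < c := Real.rpow_pos_of_pos two_pos _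
    obtain ⟨δ, hδ0, hδ1, hkey⟩ := key c hc0
    set ρ₁ : ℝ := δ / 2 with hρ₁def
    have hρ₁0 : 0 < ρ₁ := by positivity
    have hρ₁δ : ρ₁ < δ := by rw [hρ₁def]; linarith
    have hρ₁1 : ρ₁ < 1 := lt_trans hρ₁δ hδ1
    have hdivle : ∀ m : ℕ, ρ₁ / 2 ^ m ≤ ρ₁ :=
      fun m => div_le_self hρ₁0.le (one_le_pow₀ one_le_two)
    have hiter : ∀ n : ℕ, S (ρ₁ / 2 ^ n) ≤ c ^ n * S ρ₁ := by
      intro n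
      induction n with
      | zero => simp
      | succ n ih =>
        have hpos : (0:ℝ) < ρ₁ / 2 ^ n := by positivity
        have hlt : ρ₁ / 2 ^ n < δ := lt_of_le_of_lt (hdivle n) hρ₁δ
        have h2 := hkey (ρ₁ / 2 ^ n) ⟨hpos, hlt⟩
        have h3 : S (ρ₁ / 2 ^ (n + 1)) ≤ c * S (ρ₁ / 2 ^ n) := by
          apply csSup_le (Set.Nonempty.image _ (Set.nonempty_Ioc.mpr (by positivity)))
          rintro x ⟨s, hs, rfl⟩
          have he : ρ₁ / 2 ^ (n + 1) = (ρ₁ / 2 ^ n) / 2 := by ring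
          exact h2 s (he ▸ hs)
        calc S (ρ₁ / 2 ^ (n + 1)) ≤ c * S (ρ₁ / 2 ^ n) := h3
          _ ≤ c * (c ^ n * S ρ₁) := mul_le_mul_of_nonneg_left ih hc0.le
          _ = c ^ (n + 1) * S ρ₁ := by ring
    rw [Metric.tendsto_nhdsWithin_nhds]
    intro ε₀ hε₀
    have hSρ₁ : 0 < S ρ₁ := hSpos ρ₁ hρ₁0 hρ₁1
    set K : ℝ := ρ₁ ^ (-M) * 2 ^ M * S ρ₁ with hKdef
    have hK0 : 0 < K := by
      have h1 : (0:ℝ) < ρ₁ ^ (-M) := Real.rpow_pos_of_pos hρ₁0 _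
      have h2 : (0:ℝ) < (2:ℝ) ^ M := Real.rpow_pos_of_pos two_pos _
      positivity
    obtain ⟨N, hN⟩ := exists_pow_lt_of_lt_one (div_pos hε₀ hK0) (by norm_num : (1:ℝ)/2 < 1)
    refine ⟨ρ₁ / 2 ^ N, by positivity, ?_⟩
    intro t ht hdist
    have ht0 : 0 < t := ht
    rw [Real.dist_eq, sub_zero, abs_of_pos ht0] at hdist
    have hex : ∃ n : ℕ, ρ₁ / 2 ^ (n + 1) < t := by
      obtain ⟨m, hm⟩ := pow_unbounded_of_one_lt (ρ₁ / t) (one_lt_two (α := ℝ))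
      refine ⟨m, ?_⟩
      rw [div_lt_iff₀ (by positivity)] at hm ⊢
      have h2 : (2:ℝ) ^ m ≤ 2 ^ (m + 1) := pow_le_pow_right₀ one_le_two (Nat.le_succ m)
      nlinarith
    set n : ℕ := Nat.find hex with hndef
    have hn1 : ρ₁ / 2 ^ (n + 1) < t := Nat.find_spec hex
    have hn2 : t ≤ ρ₁ / 2 ^ n := by
      rcases Nat.eq_zero_or_pos n with h | h
      · rw [h]
        simpa using (le_of_lt (lt_of_lt_of_le hdist (hdivle N)))
      · have hmin := Nat.find_min hex (show n - 1 < n by omega)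
        push_neg at hmin
        have hs : n - 1 + 1 = n := by omega
        rwa [hs] at hmin
    have hnN : N ≤ n := by
      by_contra hcon
      push_neg at hcon
      have h2 : (2:ℝ) ^ (n + 1) ≤ 2 ^ N := pow_le_pow_right₀ one_le_two (by omega)
      have h3 : ρ₁ / 2 ^ N ≤ ρ₁ / 2 ^ (n + 1) := by gcongr
      linarith
    have hft : |f t| ≤ c ^ n * S ρ₁ :=
      le_trans (hle (ρ₁ / 2 ^ n) t (by positivity)
        (lt_of_le_of_lt (hdivle n) hρ₁1) ⟨ht0, hn2⟩) (hiter n)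
    have htM : t ^ (-M) ≤ (ρ₁ / 2 ^ (n + 1)) ^ (-M) :=
      Real.rpow_le_rpow_of_nonpos (by positivity) hn1.le (by linarith)
    have halg : (ρ₁ / 2 ^ (n + 1)) ^ (-M) * (c ^ n * S ρ₁) = K * (1/2) ^ n := by
      have h1 : ρ₁ / 2 ^ (n + 1) = ρ₁ * (2:ℝ) ^ (-((n:ℝ) + 1)) := by
        rw [Real.rpow_neg (by norm_num : (0:ℝ) ≤ 2),
          show ((n:ℝ) + 1) = ((n + 1 : ℕ) : ℝ) by push_cast; ring,
          Real.rpow_natCast, div_eq_mul_inv]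
      have h2 : c ^ n = (2:ℝ) ^ (-(M + 1) * (n:ℝ)) := by
        rw [hcdef, ← Real.rpow_natCast ((2:ℝ) ^ (-(M+1))) n,
          ← Real.rpow_mul (by norm_num : (0:ℝ) ≤ 2)]
      have h3 : ((1:ℝ)/2) ^ n = (2:ℝ) ^ (-(n:ℝ)) := by
        rw [Real.rpow_neg (by norm_num : (0:ℝ) ≤ 2), Real.rpow_natCast, one_div, inv_pow]
      rw [h1, h2, h3, hKdef,
        Real.mul_rpow hρ₁0.le (Real.rpow_nonneg (by norm_num) _),
        ← Real.rpow_mul (by norm_num : (0:ℝ) ≤ 2)]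
      have h4 : (2:ℝ) ^ (-((n:ℝ) + 1) * -M) * (2:ℝ) ^ (-(M + 1) * (n:ℝ))
          = (2:ℝ) ^ M * (2:ℝ) ^ (-(n:ℝ)) := by
        rw [← Real.rpow_add two_pos, ← Real.rpow_add two_pos]
        congr 1
        ring
      linear_combination (ρ₁ ^ (-M) * S ρ₁) * h4
    calc dist (t ^ (-M) * f t) 0 = t ^ (-M) * |f t| := by
          rw [Real.dist_eq, sub_zero, abs_mul,
            abs_of_nonneg (Real.rpow_nonneg ht0.le _)]
      _ ≤ (ρ₁ / 2 ^ (n + 1)) ^ (-M) * (c ^ n * S ρ₁) :=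
          mul_le_mul htM hft (abs_nonneg _) (Real.rpow_nonneg (by positivity) _)
      _ = K * (1/2) ^ n := halg
      _ ≤ K * (1/2) ^ N :=
          mul_le_mul_of_nonneg_left
            (pow_le_pow_of_le_one (by norm_num) (by norm_num) hnN) hK0.le
      _ < ε₀ := by
          rw [lt_div_iff₀ hK0] at hN
          linarith
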